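/- Rearrangement (sorted beats crossed) inequality for indirect monitoring: if 0 ≤ w_b ≤ w_a ≤ w_j ≤ w_i < 1, then F_I(w_i, w_a) + F_I(w_j, w_b) ≥ F_I(w_i, w_b) + F_I(w_j, w_a), where F_I(a,b) = 12 a² b⁴/((1+3a²b²)(1−a²b²)). -/

import Mathlib

set_option maxHeartbeats 2000000


noncomputable def F_I (a b : ℝ) : ℝ := 12 * a^2 * b^4 / ((1 + 3 * a^2 * b^2) * (1 - a^2 * b^2))

private lemma G_nonneg (u v p q : ℝ) (hu0 : 0 ≤ u) (hv0 : 0 ≤ v) (hp0 : 0 ≤ p) (hq0 : 0 ≤ q)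
    (hu1 : u ≤ 1) (hv1 : v ≤ 1) (hp1 : p ≤ 1) (hq1 : q ≤ 1) :
    0 ≤ (p+q) + 2*p*q*(u+v) + 3*u*v*(p+q)*(p^2+q^2) + 6*u*v*p*q*(u+v)*(p+q)^2
      + 3*u^2*v^2*p^2*q^2*(p+q) - 9*u*v*p^2*q^2*(p+q)*(u^2+v^2) - 18*u^2*v^2*p^3*q^3*(u+v) := by
  have hA1 : 0 ≤ (p+q) * (1 - u*v*p^2*q^2) := by
    apply mul_nonneg (by linarith)
    nlinarith [mul_nonneg hu0 hv0, mul_nonneg hp0 hq0, mul_nonneg (mul_nonneg hu0 hv0) (mul_nonneg hp0 hq0), mul_le_one₀ hu1 hv0 hv1, mul_le_one₀ hp1 hq0 hq1, mul_nonneg (mul_nonneg hp0 hq0) (mul_nonneg hp0 hq0)]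
  have hA2 : 0 ≤ 2*p*q * ((u+v) - u*v*p*q*(p+q)) := by
    apply mul_nonneg (by positivity)
    nlinarith [mul_nonneg hu0 hv0, mul_nonneg hp0 hq0, mul_le_one₀ hp1 hq0 hq1,
      mul_nonneg (mul_nonneg hu0 hv0) (mul_nonneg hp0 hq0)]
  have hA3 : 0 ≤ 3*u*v*(p+q) * (p^2 + q^2 - 2*p^2*q^2) := by
    apply mul_nonneg (by positivity)
    nlinarith [sq_nonneg (p-q), mul_nonneg hp0 hq0, mul_le_one₀ hp1 hq0 hq1]
  have hA4 : 0 ≤ 6*u*v*p^2*q^2 * ((u+v) - u*v*(p+q)) := by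
    apply mul_nonneg (by positivity)
    nlinarith [mul_nonneg hu0 hv0]
  have hA5 : 0 ≤ 9*u*v*p^2*q^2*(p+q) * ((1 + u*v) - (u^2 + v^2)) := by
    apply mul_nonneg (by positivity)
    nlinarith [mul_nonneg (sub_nonneg.2 hu1) (sub_nonneg.2 hv1), mul_nonneg hu0 (sub_nonneg.2 hu1), mul_nonneg hv0 (sub_nonneg.2 hv1)]
  have hA6 : 0 ≤ 6*u*v*p*q*(u+v) * ((p+q)^2 - p*q - 3*u*v*p^2*q^2) := by
    apply mul_nonneg (by positivity)
    nlinarith [sq_nonneg (p-q), mul_nonneg hp0 hq0, mul_le_one₀ hu1 hv0 hv1, mul_le_one₀ hp1 hq0 hq1,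
      mul_nonneg (mul_nonneg hu0 hv0) (mul_nonneg hp0 hq0)]
  nlinarith [hA1, hA2, hA3, hA4, hA5, hA6]

private lemma frac_identity (u v p q : ℝ)
    (d1 : (1 + 3*u*p) ≠ 0) (d2 : (1 - u*p) ≠ 0) (d3 : (1 + 3*u*q) ≠ 0) (d4 : (1 - u*q) ≠ 0)
    (d5 : (1 + 3*v*p) ≠ 0) (d6 : (1 - v*p) ≠ 0) (d7 : (1 + 3*v*q) ≠ 0) (d8 : (1 - v*q) ≠ 0) :
    12*u*p^2/((1 + 3*u*p)*(1 - u*p)) + 12*v*q^2/((1 + 3*v*q)*(1 - v*q))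
      - (12*u*q^2/((1 + 3*u*q)*(1 - u*q)) + 12*v*p^2/((1 + 3*v*p)*(1 - v*p)))
    = 12*(p-q)*(u-v)*((p+q) + 2*p*q*(u+v) + 3*u*v*(p+q)*(p^2+q^2) + 6*u*v*p*q*(u+v)*(p+q)^2
      + 3*u^2*v^2*p^2*q^2*(p+q) - 9*u*v*p^2*q^2*(p+q)*(u^2+v^2) - 18*u^2*v^2*p^3*q^3*(u+v))
      / ((1 + 3*u*p)*(1 - u*p)*(1 + 3*u*q)*(1 - u*q)*(1 + 3*v*p)*(1 - v*p)*(1 + 3*v*q)*(1 - v*q)) := by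
  rw [div_add_div _ _ (mul_ne_zero d1 d2) (mul_ne_zero d7 d8),
    div_add_div _ _ (mul_ne_zero d3 d4) (mul_ne_zero d5 d6),
    div_sub_div _ _ (mul_ne_zero (mul_ne_zero d1 d2) (mul_ne_zero d7 d8))
      (mul_ne_zero (mul_ne_zero d3 d4) (mul_ne_zero d5 d6)),
    div_eq_div_iff (mul_ne_zero (mul_ne_zero (mul_ne_zero d1 d2) (mul_ne_zero d7 d8))
      (mul_ne_zero (mul_ne_zero d3 d4) (mul_ne_zero d5 d6)))
      (mul_ne_zero (mul_ne_zero (mul_ne_zero (mul_ne_zero (mul_ne_zero (mul_ne_zero (mul_ne_zero d1 d2) d3) d4) d5) d6) d7) d8)]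
  ring

theorem sorted_beats_crossed (wi wj wa wb : ℝ) (hb0 : 0 ≤ wb) (hba : wb ≤ wa)
    (haj : wa ≤ wj) (hji : wj ≤ wi) (hi1 : wi < 1) :
    F_I wi wa + F_I wj wb ≥ F_I wi wb + F_I wj wa := by
  set u := wi^2 with hu
  set v := wj^2 with hv
  set p := wa^2 with hp
  set q := wb^2 with hq
  have ha0 : 0 ≤ wa := le_trans hb0 hba
  have hj0 : 0 ≤ wj := le_trans ha0 haj
  have hi0 : 0 ≤ wi := le_trans hj0 hji
  have hu0 : 0 ≤ u := sq_nonneg wi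
  have hv0 : 0 ≤ v := sq_nonneg wj
  have hp0 : 0 ≤ p := sq_nonneg wa
  have hq0 : 0 ≤ q := sq_nonneg wb
  have hu1 : u < 1 := by rw [hu]; nlinarith
  have hvu : v ≤ u := by rw [hu, hv]; nlinarith
  have hpv : p ≤ v := by rw [hv, hp]; nlinarith
  have hqp : q ≤ p := by rw [hp, hq]; nlinarith
  have hv1 : v ≤ 1 := le_of_lt (lt_of_le_of_lt hvu hu1)
  have hp1 : p ≤ 1 := le_trans hpv hv1
  have hq1 : q ≤ 1 := le_trans hqp hp1
  have hup : u*p < 1 := by nlinarith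
  have huq : u*q < 1 := by nlinarith
  have hvp : v*p < 1 := by nlinarith
  have hvq : v*q < 1 := by nlinarith
  have p1 : (0:ℝ) < 1 + 3*u*p := by nlinarith
  have p2 : (0:ℝ) < 1 - u*p := by linarith
  have p3 : (0:ℝ) < 1 + 3*u*q := by nlinarith
  have p4 : (0:ℝ) < 1 - u*q := by linarith
  have p5 : (0:ℝ) < 1 + 3*v*p := by nlinarith
  have p6 : (0:ℝ) < 1 - v*p := by linarith
  have p7 : (0:ℝ) < 1 + 3*v*q := by nlinarith
  have p8 : (0:ℝ) < 1 - v*q := by linarith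
  have hFa : F_I wi wa = 12*u*p^2/((1 + 3*u*p)*(1 - u*p)) := by
    rw [F_I, hu, hp]; ring_nf
  have hFb : F_I wj wb = 12*v*q^2/((1 + 3*v*q)*(1 - v*q)) := by
    rw [F_I, hv, hq]; ring_nf
  have hFc : F_I wi wb = 12*u*q^2/((1 + 3*u*q)*(1 - u*q)) := by
    rw [F_I, hu, hq]; ring_nf
  have hFd : F_I wj wa = 12*v*p^2/((1 + 3*v*p)*(1 - v*p)) := by
    rw [F_I, hv, hp]; ring_nf
  rw [ge_iff_le, ← sub_nonneg, hFa, hFb, hFc, hFd,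
    frac_identity u v p q p1.ne' p2.ne' p3.ne' p4.ne' p5.ne' p6.ne' p7.ne' p8.ne']
  apply div_nonneg _ (by positivity)
  have hG := G_nonneg u v p q hu0 hv0 hp0 hq0 (le_of_lt hu1) hv1 hp1 hq1
  have h12 : 0 ≤ 12*(p-q)*(u-v) := by nlinarith
  exact mul_nonneg h12 hG
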